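/- Let X be a reflexive real Banach space and Φ, Ψ : X → ℝ Gâteaux differentiable functionals such that Φ is strongly continuous, sequentially weakly lower semicontinuous and coercive, and Ψ is sequentially weakly upper semicontinuous. For r > inf_X Φ set φ(r) = inf over u ∈ Φ^{−1}((−∞,r)) of (sup{Ψ(v) : v ∈ Φ^{−1}((−∞,r))} − Ψ(u))/(r − Φ(u)). Then for every r > inf_X Φ and every λ ∈ (0, 1/φ(r)), the restriction of J_λ = Φ − λΨ to Φ^{−1}((−∞,r)) admits a global minimum, which is a critical point (local minimum) of J_λ in X. -/

import Mathlib

noncomputable section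
open Filter Set
open scoped Topology

/-- `J` has Gâteaux derivative `J'` at `u`: for every direction `v`, the difference quotients
`(J(u + t•v) - J(u))/t` converge to `J'(v)` as `t → 0`, `t ≠ 0`. -/
def HasGateauxDerivAt {X : Type} [NormedAddCommGroup X] [NormedSpace ℝ X]
    (J : X → ℝ) (J' : X →L[ℝ] ℝ) (u : X) : Prop :=
  ∀ v : X, Tendsto (fun t : ℝ => (J (u + t • v) - J u) / t)
    (nhdsWithin 0 {(0:ℝ)}ᶜ) (nhds (J' v))

/-- A sequence `x` converges weakly to `u`. -/
def WeakSeqConv {X : Type} [NormedAddCommGroup X] [NormedSpace ℝ X]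
    (x : ℕ → X) (u : X) : Prop :=
  ∀ ℓ : StrongDual ℝ X, Tendsto (fun n => ℓ (x n)) atTop (nhds (ℓ u))

section aux
open NormedSpace TopologicalSpace

/-- Separate a point from a closed subspace by a functional vanishing on the subspace. -/
lemma aux_sep_point_subspace {X : Type*} [NormedAddCommGroup X] [NormedSpace ℝ X]
    (Y : Submodule ℝ X) (hYc : IsClosed (Y : Set X)) (u : X) (hu : u ∉ Y) :
    ∃ ℓ : StrongDual ℝ X, (∀ y ∈ Y, ℓ y = 0) ∧ ℓ u ≠ 0 := by
  obtain ⟨f, c, hfs, hfx⟩ := geometric_hahn_banach_closed_point (Submodule.convex Y) hYc hu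
  have hf0 : ∀ y ∈ Y, f y = 0 := by
    intro y hy
    by_contra hne
    have h1 : f (((c + 1) / f y : ℝ) • y) < c := hfs _ (Y.smul_mem _ hy)
    rw [map_smul] at h1
    simp only [smul_eq_mul] at h1
    rw [div_mul_cancel₀ _ hne] at h1
    linarith
  refine ⟨f, hf0, ?_⟩
  have h0 : f 0 < c := hfs 0 (Y.zero_mem)
  rw [map_zero] at h0
  intro h; rw [h] at hfx; linarith

/-- If the dual of a normed space is separable, so is the space. -/
lemma aux_sep_of_dual_sep (E : Type*) [NormedAddCommGroup E] [NormedSpace ℝ E]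
    [SeparableSpace (StrongDual ℝ E)] : SeparableSpace E := by
  obtain ⟨d, dcount, ddense⟩ := TopologicalSpace.exists_countable_dense (StrongDual ℝ E)
  -- for each functional pick a norming-ish point
  have hpt : ∀ f : StrongDual ℝ E, f ≠ 0 → ∃ x : E, ‖x‖ ≤ 1 ∧ ‖f‖ / 2 < f x := by
    intro f hf
    have hfpos : 0 < ‖f‖ := norm_pos_iff.mpr hf
    have : ¬ (‖f‖ ≤ ‖f‖ / 2) := by linarith
    have hx0 : ∃ x0 : E, ¬ (‖f x0‖ ≤ (‖f‖ / 2) * ‖x0‖) := by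
      by_contra hall
      push_neg at hall
      exact this ((ContinuousLinearMap.opNorm_le_iff (by linarith)).mpr hall)
    obtain ⟨x0, hx0⟩ := hx0
    push_neg at hx0
    have hx0ne : x0 ≠ 0 := by
      intro h
      rw [h, norm_zero, mul_zero, map_zero, norm_zero] at hx0
      exact lt_irrefl _ hx0
    have hn : 0 < ‖x0‖ := norm_pos_iff.mpr hx0ne
    set x1 := ‖x0‖⁻¹ • x0 with hx1def
    have hx1norm : ‖x1‖ = 1 := by
      rw [hx1def, norm_smul, norm_inv, norm_norm, inv_mul_cancel₀ (ne_of_gt hn)]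
    have hx1 : ‖f‖ / 2 < ‖f x1‖ := by
      rw [hx1def, map_smul]
      simp only [smul_eq_mul, Real.norm_eq_abs, abs_mul, abs_inv, abs_norm]
      rw [← Real.norm_eq_abs (f x0)]
      rw [show ‖x0‖⁻¹ * ‖f x0‖ = ‖f x0‖ / ‖x0‖ by rw [div_eq_inv_mul]]
      exact (lt_div_iff₀ hn).mpr hx0
    rcases le_or_gt 0 (f x1) with h | h
    · exact ⟨x1, le_of_eq hx1norm, by rwa [Real.norm_eq_abs, abs_of_nonneg h] at hx1⟩
    · refine ⟨-x1, by rw [norm_neg]; exact le_of_eq hx1norm, ?_⟩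
      rw [map_neg]
      rwa [Real.norm_eq_abs, abs_of_neg h] at hx1
  classical
  let pt : StrongDual ℝ E → E := fun f =>
    if h : f ≠ 0 ∧ ∃ x : E, ‖x‖ ≤ 1 ∧ ‖f‖ / 2 < f x then h.2.choose else 0
  have hptspec : ∀ f : StrongDual ℝ E, f ≠ 0 → ‖pt f‖ ≤ 1 ∧ ‖f‖ / 2 < f (pt f) := by
    intro f hf
    have h : f ≠ 0 ∧ ∃ x : E, ‖x‖ ≤ 1 ∧ ‖f‖ / 2 < f x := ⟨hf, hpt f hf⟩
    simp only [pt, dif_pos h]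
    exact h.2.choose_spec
  set Z := (Submodule.span ℝ (pt '' d)).topologicalClosure with hZdef
  have hZtop : ∀ z : E, z ∈ Z := by
    by_contra hne
    push_neg at hne
    obtain ⟨z, hz⟩ := hne
    obtain ⟨F, hF0, hFz⟩ := aux_sep_point_subspace Z
      (Submodule.isClosed_topologicalClosure _) z hz
    have hFne : F ≠ 0 := by
      intro h; rw [h] at hFz; exact hFz rfl
    have hFn : 0 < ‖F‖ := norm_pos_iff.mpr hFne
    set G := ‖F‖⁻¹ • F with hGdef
    have hGnorm : ‖G‖ = 1 := by
      rw [hGdef, norm_smul, norm_inv, norm_norm, inv_mul_cancel₀ (ne_of_gt hFn)]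
    have hG0 : ∀ y ∈ Z, G y = 0 := by
      intro y hy
      rw [hGdef]
      simp [hF0 y hy]
    obtain ⟨f, hfd, hfG⟩ : ∃ f ∈ d, ‖f - G‖ < 1/4 := by
      have := Metric.dense_iff.mp ddense G (1/4) (by norm_num)
      obtain ⟨f, hf1, hf2⟩ := this
      exact ⟨f, hf2, by rw [← dist_eq_norm]; exact Metric.mem_ball.mp hf1⟩
    have hfnorm : 3/4 ≤ ‖f‖ := by
      have htri : ‖G‖ ≤ ‖G - f‖ + ‖f‖ := by
        calc ‖G‖ = ‖(G - f) + f‖ := by rw [sub_add_cancel]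
          _ ≤ ‖G - f‖ + ‖f‖ := norm_add_le _ _
      rw [norm_sub_rev] at htri
      rw [hGnorm] at htri
      linarith
    have hfne : f ≠ 0 := by
      intro h; rw [h, norm_zero] at hfnorm; linarith
    obtain ⟨hpt1, hpt2⟩ := hptspec f hfne
    have hmem : pt f ∈ Z := by
      apply Submodule.le_topologicalClosure
      exact Submodule.subset_span ⟨f, hfd, rfl⟩
    have hGpt : G (pt f) = 0 := hG0 _ hmem
    have : f (pt f) = (f - G) (pt f) + G (pt f) := by
      simp [ContinuousLinearMap.sub_apply]
    rw [hGpt, add_zero] at this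
    have hb : ‖(f - G) (pt f)‖ ≤ ‖f - G‖ * ‖pt f‖ := ContinuousLinearMap.le_opNorm _ _
    have : f (pt f) ≤ 1/4 := by
      rw [this]
      calc (f - G) (pt f) ≤ ‖(f - G) (pt f)‖ := le_abs_self _
        _ ≤ ‖f - G‖ * ‖pt f‖ := hb
        _ ≤ (1/4) * 1 := by
            apply mul_le_mul (le_of_lt hfG) hpt1 (norm_nonneg _) (by norm_num)
        _ = 1/4 := by norm_num
    linarith
  have hsep : IsSeparable (Set.univ : Set E) := by
    have h1 : IsSeparable (pt '' d) := (dcount.image pt).isSeparable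
    have h2 : IsSeparable ((Submodule.span ℝ (pt '' d) : Submodule ℝ E) : Set E) := h1.span
    have h3 : IsSeparable (closure ((Submodule.span ℝ (pt '' d) : Submodule ℝ E) : Set E)) :=
      h2.closure
    have h4 : (Z : Set E) = Set.univ := by
      ext z; simp [hZtop z]
    rw [← h4]
    rw [hZdef, Submodule.topologicalClosure_coe]
    exact h3
  exact isSeparable_univ_iff.mp hsep

end aux

section part2
open NormedSpace TopologicalSpace
set_option maxHeartbeats 1000000
variable {X : Type*} [NormedAddCommGroup X] [NormedSpace ℝ X] [CompleteSpace X]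

/-- Sequential weak compactness of bounded sequences in a reflexive space. -/
theorem aux_exists_weak_subseq
    (hrefl : Function.Surjective (NormedSpace.inclusionInDoubleDual ℝ X))
    (x : ℕ → X) (C : ℝ) (hC : ∀ n, ‖x n‖ ≤ C) :
    ∃ (u : X) (g : ℕ → ℕ), StrictMono g ∧
      ∀ ℓ : StrongDual ℝ X, Tendsto (fun n => ℓ (x (g n))) atTop (𝓝 (ℓ u)) := by
  have hC0 : 0 ≤ C := le_trans (norm_nonneg _) (hC 0)
  set Y := (Submodule.span ℝ (Set.range x)).topologicalClosure with hYdef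
  have hYc : IsClosed (Y : Set X) := Submodule.isClosed_topologicalClosure _
  have hxY : ∀ n, x n ∈ Y := fun n =>
    Submodule.le_topologicalClosure _ (Submodule.subset_span ⟨n, rfl⟩)
  set xY : ℕ → Y := fun n => ⟨x n, hxY n⟩ with hxYdef
  haveI : SeparableSpace Y := by
    have h1 : IsSeparable (Set.range x) := (Set.countable_range x).isSeparable
    have h2 : IsSeparable ((Submodule.span ℝ (Set.range x) : Submodule ℝ X) : Set X) := h1.span
    have h3 := h2.closure
    rw [← Submodule.topologicalClosure_coe] at h3
    exact h3.separableSpace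
  set R : StrongDual ℝ X →L[ℝ] StrongDual ℝ Y :=
    (ContinuousLinearMap.compL ℝ Y X ℝ).flip Y.subtypeL with hRdef
  have hR : ∀ (ℓ : StrongDual ℝ X) (y : Y), (R ℓ) y = ℓ y := fun ℓ y => rfl
  -- Y is reflexive
  have hYrefl : Function.Surjective (NormedSpace.inclusionInDoubleDual ℝ Y) := by
    intro f
    obtain ⟨xx, hxx⟩ := hrefl (f.comp R)
    have hxxY : xx ∈ Y := by
      by_contra hn
      obtain ⟨ℓ, hℓ0, hℓx⟩ := aux_sep_point_subspace Y hYc xx hn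
      have h1 : ℓ xx = f (R ℓ) := by
        have h := congrArg (fun T => T ℓ) hxx
        simpa [NormedSpace.dual_def] using h
      have h2 : R ℓ = 0 := by
        ext y
        exact hℓ0 y y.2
      rw [h2, map_zero] at h1
      exact hℓx h1
    refine ⟨⟨xx, hxxY⟩, ?_⟩
    ext ℓ'
    obtain ⟨g, hg, -⟩ := exists_extension_norm_eq Y ℓ'
    have hRg : R g = ℓ' := by
      ext y
      exact hg y
    have h3 : g xx = f (R g) := by
      have h := congrArg (fun T => T g) hxx
      simpa [NormedSpace.dual_def] using h
    rw [NormedSpace.dual_def, ← hRg, ← h3]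
    exact hR g ⟨xx, hxxY⟩
  haveI : SeparableSpace (StrongDual ℝ (StrongDual ℝ Y)) :=
    (hYrefl.denseRange).separableSpace (NormedSpace.inclusionInDoubleDual ℝ Y).continuous
  haveI : SeparableSpace (StrongDual ℝ Y) := aux_sep_of_dual_sep (StrongDual ℝ Y)
  obtain ⟨D, Dcount, Ddense⟩ := TopologicalSpace.exists_countable_dense (StrongDual ℝ Y)
  obtain ⟨enum, henum⟩ := Dcount.exists_eq_range (Ddense.nonempty)
  -- sequential compactness in ℝ^ℕ
  set M : ℕ → ℝ := fun k => ‖enum k‖ * C + 1 with hMdef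
  set K : Set (ℕ → ℝ) := Set.univ.pi (fun k => Icc (-(M k)) (M k)) with hKdef
  have hKc : IsCompact K := isCompact_univ_pi (fun k => isCompact_Icc)
  set T : ℕ → (ℕ → ℝ) := fun n k => enum k (xY n) with hTdef
  have hTK : ∀ n, T n ∈ K := by
    intro n k _
    have hb : ‖enum k (xY n)‖ ≤ ‖enum k‖ * C := by
      calc ‖enum k (xY n)‖ ≤ ‖enum k‖ * ‖xY n‖ := (enum k).le_opNorm _
        _ ≤ ‖enum k‖ * C := by
            apply mul_le_mul_of_nonneg_left _ (ContinuousLinearMap.opNorm_nonneg _)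
            exact hC n
    rw [Real.norm_eq_abs] at hb
    have hMk : ‖enum k‖ * C ≤ M k := by
      show ‖enum k‖ * C ≤ ‖enum k‖ * C + 1
      linarith
    have := abs_le.mp (le_trans hb hMk)
    exact ⟨this.1, this.2⟩
  obtain ⟨a, -, g, hgmono, hgconv⟩ := hKc.isSeqCompact hTK
  have hcoord : ∀ k, Tendsto (fun j => enum k (xY (g j))) atTop (𝓝 (a k)) := by
    intro k
    exact (tendsto_pi_nhds.mp hgconv) k
  -- Cauchy for every functional
  have hCau : ∀ ℓ : StrongDual ℝ X, CauchySeq (fun j => ℓ (x (g j))) := by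
    intro ℓ
    rw [Metric.cauchySeq_iff]
    intro ε hε
    have hεC : 0 < ε / (4 * (C + 1)) := by positivity
    obtain ⟨f, hball, hfD⟩ := Metric.dense_iff.mp Ddense (R ℓ) (ε / (4 * (C + 1))) hεC
    obtain ⟨k, hk⟩ : ∃ k, enum k = f := by
      rw [henum] at hfD
      obtain ⟨k, hk⟩ := hfD
      exact ⟨k, hk⟩
    have hdist : ‖R ℓ - enum k‖ < ε / (4 * (C + 1)) := by
      rw [hk]
      have hb := Metric.mem_ball.mp hball
      exact lt_of_eq_of_lt (dist_eq_norm (R ℓ) f).symm ((dist_comm f (R ℓ)) ▸ hb)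
    have hcau_k : CauchySeq (fun j => enum k (xY (g j))) := (hcoord k).cauchySeq
    rw [Metric.cauchySeq_iff] at hcau_k
    obtain ⟨N, hN⟩ := hcau_k (ε / 2) (by positivity)
    refine ⟨N, fun m hm n hn => ?_⟩
    have key : ∀ j, |ℓ (x (g j)) - enum k (xY (g j))| ≤ ε / 4 := by
      intro j
      have h1 : ℓ (x (g j)) - enum k (xY (g j)) = (R ℓ - enum k) (xY (g j)) := by
        rw [ContinuousLinearMap.sub_apply, hR]
      rw [h1, ← Real.norm_eq_abs]
      calc ‖(R ℓ - enum k) (xY (g j))‖ ≤ ‖R ℓ - enum k‖ * ‖xY (g j)‖ :=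
            (R ℓ - enum k).le_opNorm _
        _ ≤ (ε / (4 * (C + 1))) * (C + 1) := by
            apply mul_le_mul (le_of_lt hdist) _ (norm_nonneg _) (le_of_lt hεC)
            calc ‖xY (g j)‖ = ‖x (g j)‖ := rfl
              _ ≤ C := hC _
              _ ≤ C + 1 := by linarith
        _ = ε / 4 := by field_simp
    have hmid := hN m hm n hn
    rw [Real.dist_eq] at hmid ⊢
    have h4 := abs_sub_le (ℓ (x (g m))) (enum k (xY (g m))) (ℓ (x (g n)))
    have h5 := abs_sub_le (enum k (xY (g m))) (enum k (xY (g n))) (ℓ (x (g n)))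
    have h6 : |enum k (xY (g n)) - ℓ (x (g n))| = |ℓ (x (g n)) - enum k (xY (g n))| :=
      abs_sub_comm _ _
    linarith [key m, key n]
  -- the limit functional
  have hlim : ∀ ℓ : StrongDual ℝ X, ∃ L, Tendsto (fun j => ℓ (x (g j))) atTop (𝓝 L) :=
    fun ℓ => cauchySeq_tendsto_of_complete (hCau ℓ)
  choose Lf hLf using hlim
  have hadd : ∀ ℓ₁ ℓ₂ : StrongDual ℝ X, Lf (ℓ₁ + ℓ₂) = Lf ℓ₁ + Lf ℓ₂ := by
    intro ℓ₁ ℓ₂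
    refine tendsto_nhds_unique (hLf (ℓ₁ + ℓ₂)) ?_
    have h := (hLf ℓ₁).add (hLf ℓ₂)
    simpa [ContinuousLinearMap.add_apply] using h
  have hsmul : ∀ (c : ℝ) (ℓ : StrongDual ℝ X), Lf (c • ℓ) = c * Lf ℓ := by
    intro c ℓ
    refine tendsto_nhds_unique (hLf (c • ℓ)) ?_
    have h := (hLf ℓ).const_mul c
    simpa [ContinuousLinearMap.smul_apply, smul_eq_mul] using h
  have hbound : ∀ ℓ : StrongDual ℝ X, ‖Lf ℓ‖ ≤ C * ‖ℓ‖ := by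
    intro ℓ
    have habs : Tendsto (fun j => ‖ℓ (x (g j))‖) atTop (𝓝 ‖Lf ℓ‖) := (hLf ℓ).norm
    refine le_of_tendsto habs (Eventually.of_forall fun j => ?_)
    calc ‖ℓ (x (g j))‖ ≤ ‖ℓ‖ * ‖x (g j)‖ := ℓ.le_opNorm _
      _ ≤ ‖ℓ‖ * C := mul_le_mul_of_nonneg_left (hC _) (norm_nonneg _)
      _ = C * ‖ℓ‖ := mul_comm _ _
  set LLlin : StrongDual ℝ X →ₗ[ℝ] ℝ :=
    { toFun := Lf
      map_add' := hadd
      map_smul' := hsmul } with hLLlin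
  set LL : StrongDual ℝ (StrongDual ℝ X) := LLlin.mkContinuous C hbound with hLLdef
  obtain ⟨u, hu⟩ := hrefl LL
  refine ⟨u, g, hgmono, fun ℓ => ?_⟩
  have hue : ℓ u = Lf ℓ := by
    have h := congrArg (fun T => T ℓ) hu
    exact (by simpa [NormedSpace.dual_def] using h : ℓ u = LL ℓ)
  rw [hue]
  exact hLf ℓ

end part2

section part3
open NormedSpace TopologicalSpace
set_option maxHeartbeats 1600000

/-- **Ricceri-type local minimum theorem.** Let `X` be a reflexive real Banach space and
`Φ, Ψ : X → ℝ` Gâteaux differentiable functionals with `Φ` strongly continuous, sequentially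
weakly lower semicontinuous and coercive, and `Ψ` sequentially weakly upper semicontinuous.
For `r > inf_X Φ` let
`φ(r) = inf_{u : Φ(u) < r} ( sup{Ψ(v) : Φ(v) < r} - Ψ(u) ) / ( r - Φ(u) )`.
Then for every `r > inf_X Φ` and every `λ ∈ (0, 1/φ(r))`, the restriction of
`J_λ = Φ - λΨ` to `Φ⁻¹((-∞, r))` admits a global minimum, which is a critical point
(a local minimum) of `J_λ` in `X`. -/
theorem ricceri_local_minimum
    {X : Type} [NormedAddCommGroup X] [NormedSpace ℝ X] [CompleteSpace X]
    (hreflexive : Function.Surjective (NormedSpace.inclusionInDoubleDual ℝ X))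
    (Φ Ψ : X → ℝ) (Φ' Ψ' : X → X →L[ℝ] ℝ)
    (hΦdiff : ∀ u, HasGateauxDerivAt Φ (Φ' u) u)
    (hΨdiff : ∀ u, HasGateauxDerivAt Ψ (Ψ' u) u)
    (hΦcont : Continuous Φ)
    (hΦwlsc : ∀ (u : X) (x : ℕ → X), WeakSeqConv x u →
      Φ u ≤ atTop.liminf fun n => Φ (x n))
    (hΦcoercive : Tendsto Φ (Filter.comap norm atTop) atTop)
    (hΨwusc : ∀ (u : X) (x : ℕ → X), WeakSeqConv x u →
      (atTop.limsup fun n => Ψ (x n)) ≤ Ψ u)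
    (r : ℝ) (hr : sInf (Set.range Φ) < r)
    (φr : ℝ)
    (hφr : φr = sInf ((fun u => (sSup (Ψ '' {v | Φ v < r}) - Ψ u) / (r - Φ u)) ''
      {u | Φ u < r}))
    (lam : ℝ) (hlam : lam ∈ Set.Ioo 0 (1 / φr)) :
    ∃ u : X, Φ u < r ∧
      (∀ v : X, Φ v < r → Φ u - lam * Ψ u ≤ Φ v - lam * Ψ v) ∧
      IsLocalMin (fun v => Φ v - lam * Ψ v) u ∧
      Φ' u = lam • Ψ' u := by
  classical
  set S : Set X := {u | Φ u < r} with hSdef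
  set Q : ℝ := sSup (Ψ '' S) with hQdef
  set A : Set ℝ := (fun u => (Q - Ψ u) / (r - Φ u)) '' S with hAdef
  set Jf : X → ℝ := fun v => Φ v - lam * Ψ v with hJfdef
  have hφrA : φr = sInf A := hφr
  have hlam0 : 0 < lam := hlam.1
  have hφrpos : 0 < φr := by
    by_contra h
    push_neg at h
    have h2 : 1 / φr ≤ 0 := one_div_nonpos.mpr h
    linarith [hlam.2, hlam.1]
  have hSne : S.Nonempty := by
    by_contra h
    rw [Set.not_nonempty_iff_eq_empty] at h
    have : φr = 0 := by rw [hφrA, hAdef, h, Set.image_empty, Real.sInf_empty]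
    linarith
  have hAbb : BddBelow A := by
    by_contra h
    have : φr = 0 := by rw [hφrA, Real.sInf_of_not_bddBelow h]
    linarith
  have hAlow : ∀ u ∈ S, φr ≤ (Q - Ψ u) / (r - Φ u) := fun u hu =>
    hφrA ▸ csInf_le hAbb ⟨u, hu, rfl⟩
  have hrpos : ∀ u ∈ S, 0 < r - Φ u := fun u hu => sub_pos.mpr hu
  have hΨbdd : BddAbove (Ψ '' S) := by
    by_contra h
    have hQ0 : Q = 0 := by rw [hQdef, Real.sSup_of_not_bddAbove h]
    refine h ⟨0, ?_⟩
    rintro v ⟨u, hu, rfl⟩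
    have h1 := hAlow u hu
    rw [hQ0] at h1
    have h2 := hrpos u hu
    by_contra hv
    push_neg at hv
    have h3 : (0 - Ψ u) / (r - Φ u) < 0 := div_neg_of_neg_of_pos (by linarith) h2
    linarith
  have hQle : ∀ u ∈ S, Ψ u ≤ Q := fun u hu => le_csSup hΨbdd ⟨u, hu, rfl⟩
  -- find u0 with good energy level
  have hφrlt : φr < 1 / lam := by
    rw [lt_div_iff₀ hlam0]
    have h := hlam.2
    rw [lt_div_iff₀ hφrpos] at h
    nlinarith
  obtain ⟨a0, ha0A, ha0lt⟩ := (csInf_lt_iff hAbb (hSne.image _)).mp (hφrA ▸ hφrlt)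
  obtain ⟨u0, hu0S, ha0⟩ := ha0A
  have hu0 : Jf u0 < r - lam * Q := by
    have h2 : 0 < r - Φ u0 := hrpos u0 hu0S
    have ha0'' : (Q - Ψ u0) / (r - Φ u0) = a0 := ha0
    have ha0lt' : (Q - Ψ u0) / (r - Φ u0) < 1 / lam := ha0'' ▸ ha0lt
    rw [div_lt_div_iff₀ h2 hlam0] at ha0lt'
    show Φ u0 - lam * Ψ u0 < r - lam * Q
    nlinarith
  -- boundedness of S
  obtain ⟨c, hc⟩ : ∃ c : ℝ, ∀ u : X, c ≤ ‖u‖ → r ≤ Φ u := by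
    have h1 : Φ ⁻¹' (Set.Ici r) ∈ Filter.comap norm atTop := hΦcoercive (mem_atTop r)
    rw [Filter.mem_comap] at h1
    obtain ⟨t, ht, hsub⟩ := h1
    obtain ⟨cc, hcc⟩ := mem_atTop_sets.mp ht
    exact ⟨cc, fun u hu => hsub (hcc _ hu)⟩
  have hSbound : ∀ u ∈ S, ‖u‖ ≤ |c| := by
    intro u hu
    by_contra h
    push_neg at h
    have h1 : r ≤ Φ u := hc u (le_trans (le_abs_self c) (le_of_lt h))
    exact absurd hu (by simp only [hSdef, Set.mem_setOf_eq]; linarith)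
  -- key lower semicontinuity lemma (junk-value free)
  have key : ∀ (u : X) (y : ℕ → X), WeakSeqConv y u → ∀ c', c' < Φ u →
      ∀ᶠ n in atTop, c' < Φ (y n) := by
    intro u y hy c' hc'
    by_contra hev
    rw [Filter.not_eventually] at hev
    have hfreq : ∃ᶠ n in atTop, Φ (y n) ≤ c' := hev.mono (fun n hn => not_lt.mp hn)
    obtain ⟨g, hgmono, hgle⟩ := Filter.extraction_of_frequently_atTop hfreq
    set c'' := (c' + Φ u) / 2 with hc''def
    have hc''1 : c' < c'' := by rw [hc''def]; linarith
    have hc''2 : c'' < Φ u := by rw [hc''def]; linarith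
    have hIVT : ∀ j : ℕ, ∃ t ∈ Set.Icc (0:ℝ) 1, Φ (u + t • (y (g j) - u)) = c'' := by
      intro j
      have hcont : ContinuousOn (fun t : ℝ => Φ (u + t • (y (g j) - u))) (Set.Icc 0 1) :=
        (hΦcont.comp (by continuity)).continuousOn
      have hmem : c'' ∈ Set.Icc ((fun t : ℝ => Φ (u + t • (y (g j) - u))) 1)
          ((fun t : ℝ => Φ (u + t • (y (g j) - u))) 0) := by
        constructor
        · show c'' ≥ Φ (u + (1:ℝ) • (y (g j) - u))
          simp only [one_smul, add_sub_cancel]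
          exact le_trans (hgle j) (le_of_lt hc''1)
        · show c'' ≤ Φ (u + (0:ℝ) • (y (g j) - u))
          simp only [zero_smul, add_zero]
          exact le_of_lt hc''2
      obtain ⟨t, ht, htv⟩ := intermediate_value_Icc' (by norm_num : (0:ℝ) ≤ 1) hcont hmem
      exact ⟨t, ht, htv⟩
    choose t ht htv using hIVT
    have hzweak : WeakSeqConv (fun j => u + t j • (y (g j) - u)) u := by
      intro ℓ
      have h1 : ∀ j, ℓ (u + t j • (y (g j) - u)) = ℓ u + t j * (ℓ (y (g j)) - ℓ u) := by
        intro j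
        rw [map_add, map_smul, map_sub]
        simp [smul_eq_mul]
      have h2 : Tendsto (fun j => ℓ (y (g j)) - ℓ u) atTop (𝓝 0) := by
        have h3 := (hy ℓ).comp hgmono.tendsto_atTop
        have h4 := h3.sub (tendsto_const_nhds (x := ℓ u))
        simpa using h4
      have h3 : Tendsto (fun j => t j * (ℓ (y (g j)) - ℓ u)) atTop (𝓝 0) := by
        have hnorm0 : Tendsto (fun j => ‖ℓ (y (g j)) - ℓ u‖) atTop (𝓝 0) := by
          simpa using h2.norm
        refine squeeze_zero_norm (fun j => ?_) hnorm0
        rw [norm_mul]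
        have ht1 := (ht j).1
        have ht2 := (ht j).2
        have : ‖t j‖ ≤ 1 := by rw [Real.norm_eq_abs, abs_le]; exact ⟨by linarith, ht2⟩
        nlinarith [norm_nonneg (ℓ (y (g j)) - ℓ u), this]
      have h5 := (tendsto_const_nhds (x := ℓ u)).add h3
      rw [add_zero] at h5
      refine Tendsto.congr (fun j => (h1 j).symm) h5
    have hle := hΦwlsc u _ hzweak
    have hconst : (fun j => Φ ((fun j => u + t j • (y (g j) - u)) j)) = fun _ => c'' :=
      funext htv
    rw [hconst, Filter.liminf_const] at hle
    linarith
  -- Jf is bounded below on S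
  have hJbdd : BddBelow (Jf '' S) := by
    by_contra hnb
    rw [not_bddBelow_iff] at hnb
    have hx : ∀ n : ℕ, ∃ u, u ∈ S ∧ Jf u < -(n:ℝ) := by
      intro n
      obtain ⟨a, ⟨u, huS, rfl⟩, ha⟩ := hnb (-(n:ℝ))
      exact ⟨u, huS, ha⟩
    choose xs hxsS hxsJ using hx
    obtain ⟨u, g, hgmono, hw⟩ := aux_exists_weak_subseq hreflexive xs |c|
      (fun n => hSbound _ (hxsS n))
    have hev1 : ∀ᶠ j in atTop, Φ u - 1 < Φ (xs (g j)) :=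
      key u (fun j => xs (g j)) hw (Φ u - 1) (by linarith)
    have hcontra : ∀ᶠ j : ℕ in atTop, (Φ u - 1 - lam * Q : ℝ) < -(j:ℝ) := by
      filter_upwards [hev1] with j hj
      have h1 := hxsJ (g j)
      have h2 : (j:ℝ) ≤ (g j : ℝ) := by exact_mod_cast hgmono.le_apply
      have h3 := hQle _ (hxsS (g j))
      have h4 : Jf (xs (g j)) = Φ (xs (g j)) - lam * Ψ (xs (g j)) := rfl
      nlinarith
    obtain ⟨j, hj1, hj2⟩ :=
      ((eventually_gt_atTop (⌈-(Φ u - 1 - lam * Q)⌉₊)).and hcontra).exists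
    have h5 : -(Φ u - 1 - lam * Q) ≤ (⌈-(Φ u - 1 - lam * Q)⌉₊ : ℝ) := Nat.le_ceil _
    have h6 : ((⌈-(Φ u - 1 - lam * Q)⌉₊ : ℕ) : ℝ) ≤ (j : ℝ) := by exact_mod_cast le_of_lt hj1
    linarith
  set m := sInf (Jf '' S) with hmdef
  have hmle : ∀ v ∈ S, m ≤ Jf v := fun v hv => csInf_le hJbdd ⟨v, hv, rfl⟩
  have hmu0 : m < r - lam * Q := lt_of_le_of_lt (hmle u0 hu0S) hu0
  -- minimizing sequence
  have hminseq : ∀ n : ℕ, ∃ u, u ∈ S ∧ Jf u < m + 1/((n:ℝ)+1) := by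
    intro n
    obtain ⟨a, haA, halt⟩ := Real.lt_sInf_add_pos (hSne.image Jf)
      (by positivity : (0:ℝ) < 1/((n:ℝ)+1))
    obtain ⟨u, huS, rfl⟩ := haA
    exact ⟨u, huS, halt⟩
  choose xs hxsS hxsJ using hminseq
  have hxsJ2 : Tendsto (fun n => Jf (xs n)) atTop (𝓝 m) := by
    apply tendsto_of_tendsto_of_tendsto_of_le_of_le (g := fun _ => m)
      (h := fun n : ℕ => m + 1/((n:ℝ)+1)) tendsto_const_nhds ?_
      (fun n => hmle _ (hxsS n)) (fun n => le_of_lt (hxsJ n))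
    have := (tendsto_const_nhds (x := m) (f := atTop (α := ℕ))).add
      tendsto_one_div_add_atTop_nhds_zero_nat
    simpa using this
  obtain ⟨ub, g, hgmono, hw⟩ := aux_exists_weak_subseq hreflexive xs |c|
    (fun n => hSbound _ (hxsS n))
  set y : ℕ → X := fun j => xs (g j) with hydef
  have hyS : ∀ j, y j ∈ S := fun j => hxsS (g j)
  have hyJ : Tendsto (fun j => Jf (y j)) atTop (𝓝 m) := hxsJ2.comp hgmono.tendsto_atTop
  have hyw : WeakSeqConv y ub := hw
  have hyJub : ∀ j, Jf (y j) < m + 1 := by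
    intro j
    have h1 := hxsJ (g j)
    have h2 : 1/((g j : ℝ)+1) ≤ 1 := by
      rw [div_le_one (by positivity)]
      have : (0:ℝ) ≤ (g j : ℝ) := Nat.cast_nonneg _
      linarith
    calc Jf (y j) < m + 1/((g j : ℝ)+1) := h1
      _ ≤ m + 1 := by linarith
  have hev1 : ∀ᶠ j in atTop, Φ ub - 1 < Φ (y j) := key ub y hyw _ (by linarith)
  obtain ⟨N, hN⟩ := eventually_atTop.mp hev1
  set z : ℕ → X := fun j => y (j + N) with hzdef
  have hzS : ∀ j, z j ∈ S := fun j => hyS _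
  have hzw : WeakSeqConv z ub := fun ℓ => (hyw ℓ).comp (tendsto_add_atTop_nat N)
  have hzJ : Tendsto (fun j => Jf (z j)) atTop (𝓝 m) := hyJ.comp (tendsto_add_atTop_nat N)
  have hzΦlb : ∀ j, Φ ub - 1 < Φ (z j) := fun j => hN _ (Nat.le_add_left N j)
  have hzΦub : ∀ j, Φ (z j) < r := fun j => hzS j
  set lo : ℝ := (Φ ub - 1 - (m+1))/lam with hlodef
  have hzΨ : ∀ j, Ψ (z j) ∈ Set.Icc lo Q := by
    intro j
    refine ⟨?_, hQle _ (hzS j)⟩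
    have h1 : Jf (z j) < m + 1 := hyJub _
    have h2 : Jf (z j) = Φ (z j) - lam * Ψ (z j) := rfl
    have h3 := hzΦlb j
    rw [hlodef, div_le_iff₀ hlam0]
    nlinarith
  -- extract convergent subsequences of Φ∘z and Ψ∘z
  obtain ⟨α, -, σ, hσmono, hσconv⟩ := tendsto_subseq_of_bounded
    (Metric.isBounded_Icc (Φ ub - 1) r)
    (x := fun j => Φ (z j)) (fun j => ⟨le_of_lt (hzΦlb j), le_of_lt (hzΦub j)⟩)
  obtain ⟨β, -, τ, hτmono, hτconv⟩ := tendsto_subseq_of_bounded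
    (Metric.isBounded_Icc lo Q)
    (x := fun i => Ψ (z (σ i))) (fun i => hzΨ (σ i))
  set w : ℕ → X := fun i => z (σ (τ i)) with hwdef
  have hwS : ∀ i, w i ∈ S := fun i => hzS _
  have hww : WeakSeqConv w ub := fun ℓ =>
    (hzw ℓ).comp ((hσmono.comp hτmono).tendsto_atTop)
  have hwJ : Tendsto (fun i => Jf (w i)) atTop (𝓝 m) :=
    hzJ.comp ((hσmono.comp hτmono).tendsto_atTop)
  have hwΦ : Tendsto (fun i => Φ (w i)) atTop (𝓝 α) := hσconv.comp hτmono.tendsto_atTop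
  have hwΨ : Tendsto (fun i => Ψ (w i)) atTop (𝓝 β) := hτconv
  have hαβ : α - lam * β = m := by
    have hcomb := hwΦ.sub (hwΨ.const_mul lam)
    have heq : (fun i => Φ (w i) - lam * Ψ (w i)) = fun i => Jf (w i) := rfl
    rw [heq] at hcomb
    exact tendsto_nhds_unique hcomb hwJ
  have hαr : α ≤ r := le_of_tendsto hwΦ (Filter.Eventually.of_forall fun i =>
    le_of_lt (hzΦub _))
  have hΦuble : Φ ub ≤ α := by
    by_contra h
    push_neg at h
    have h1 : ∀ᶠ i in atTop, (α + Φ ub)/2 < Φ (w i) :=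
      key ub w hww _ (by linarith)
    have h2 : ∀ᶠ i in atTop, Φ (w i) < (α + Φ ub)/2 :=
      hwΦ.eventually_lt_const (by linarith)
    obtain ⟨i, hi1, hi2⟩ := (h1.and h2).exists
    linarith
  have hβub : β ≤ Ψ ub := by
    have h1 := hΨwusc ub w hww
    rw [hwΨ.limsup_eq] at h1
    exact h1
  have hJub : Jf ub ≤ m := by
    rw [← hαβ]
    show Φ ub - lam * Ψ ub ≤ α - lam * β
    nlinarith
  have hβQ : β ≤ Q := le_of_tendsto hwΨ (Filter.Eventually.of_forall fun i =>
    hQle _ (hwS i))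
  have hubS : Φ ub < r := by
    rcases lt_or_ge (Φ ub) r with h | h
    · exact h
    · exfalso
      have hα : α = r := le_antisymm hαr (le_trans h hΦuble)
      have h1 : lam * Q < lam * β := by nlinarith
      have h2 : Q < β := lt_of_mul_lt_mul_left h1 (le_of_lt hlam0)
      linarith
  have hglobal : ∀ v : X, Φ v < r → Jf ub ≤ Jf v := fun v hv =>
    le_trans hJub (hmle v hv)
  have hSopen : IsOpen S := IsOpen.preimage hΦcont isOpen_Iio
  have hlocal : IsLocalMin Jf ub :=
    Filter.eventually_of_mem (hSopen.mem_nhds hubS) (fun v hv => hglobal v hv)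
  -- critical point
  have hcrit : ∀ v : X, (Φ' ub) v - lam * (Ψ' ub) v = 0 := by
    intro v
    set L := (Φ' ub) v - lam * (Ψ' ub) v with hLdef
    have hquot : Tendsto (fun tt : ℝ => (Jf (ub + tt • v) - Jf ub) / tt)
        (nhdsWithin 0 {(0:ℝ)}ᶜ) (𝓝 L) := by
      have h1 := hΦdiff ub v
      have h2 := (hΨdiff ub v).const_mul lam
      have h3 := h1.sub h2
      refine Tendsto.congr (fun tt => ?_) h3
      show (Φ (ub + tt • v) - Φ ub) / tt - lam * ((Ψ (ub + tt • v) - Ψ ub) / tt)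
        = (Jf (ub + tt • v) - Jf ub) / tt
      show _ = ((Φ (ub + tt • v) - lam * Ψ (ub + tt • v)) - (Φ ub - lam * Ψ ub)) / tt
      ring
    have hmemnhds : ∀ᶠ tt : ℝ in 𝓝 0, ub + tt • v ∈ S := by
      have hcont2 : Continuous (fun tt : ℝ => ub + tt • v) := by continuity
      have h4 : Tendsto (fun tt : ℝ => ub + tt • v) (𝓝 0) (𝓝 ub) := by
        have := hcont2.tendsto 0
        simpa using this
      exact h4.eventually_mem (hSopen.mem_nhds hubS)
    have hge : 0 ≤ L := by
      have htend : Tendsto (fun tt : ℝ => (Jf (ub + tt • v) - Jf ub) / tt)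
          (nhdsWithin 0 (Set.Ioi 0)) (𝓝 L) :=
        hquot.mono_left (nhdsWithin_mono 0 (fun tt htt => ne_of_gt htt))
      refine ge_of_tendsto htend ?_
      filter_upwards [hmemnhds.filter_mono nhdsWithin_le_nhds,
        self_mem_nhdsWithin] with tt hmem htt
      exact div_nonneg (by have := hglobal _ hmem; linarith) (le_of_lt htt)
    have hle : L ≤ 0 := by
      have htend : Tendsto (fun tt : ℝ => (Jf (ub + tt • v) - Jf ub) / tt)
          (nhdsWithin 0 (Set.Iio 0)) (𝓝 L) :=
        hquot.mono_left (nhdsWithin_mono 0 (fun tt htt => ne_of_lt htt))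
      refine le_of_tendsto htend ?_
      filter_upwards [hmemnhds.filter_mono nhdsWithin_le_nhds,
        self_mem_nhdsWithin] with tt hmem htt
      exact div_nonpos_of_nonneg_of_nonpos (by have := hglobal _ hmem; linarith)
        (le_of_lt htt)
    linarith
  refine ⟨ub, hubS, hglobal, hlocal, ?_⟩
  ext v
  have h1 := hcrit v
  show (Φ' ub) v = (lam • Ψ' ub) v
  rw [ContinuousLinearMap.smul_apply, smul_eq_mul]
  linarith

end part3

end
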